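/- Assume Property 3. Fates are inherited backwards along fast reactions: for every fast reaction ({a}, {b_1, …, b_n}) in R and all finite multisets F_1, …, F_n of resting sets with Fate(b_i, F_i) for each i, Fate(a, F_1 + … + F_n) holds. -/

import Mathlib

/-- A reaction: a pair (reactants, products) of finite multisets of complexes. -/
abbrev Rxn (C : Type*) := Multiset C × Multiset C

variable {C : Type*}

/-- Edge of the fast-reaction digraph Γ: a fast (1,1) reaction ({x}, {y}) in R. -/
def FastEdge (R : Set (Rxn C)) (x y : C) : Prop :=
  ((({x} : Multiset C), ({y} : Multiset C)) : Rxn C) ∈ R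

/-- Reachability along Γ. -/
def Reach (R : Set (Rxn C)) : C → C → Prop :=
  Relation.ReflTransGen (FastEdge R)

/-- The strongly connected component of Γ containing x. -/
def scc (R : Set (Rxn C)) (x : C) : Set C :=
  {y | Reach R x y ∧ Reach R y x}

/-- Q is a resting set: an SCC of Γ all of whose outgoing fast reactions stay in Q. -/
def IsRestingSet (R : Set (Rxn C)) (Q : Set C) : Prop :=
  (∃ x, Q = scc R x) ∧
    ∀ r ∈ R, r.1.card = 1 → (∀ a ∈ r.1, a ∈ Q) → ∀ b ∈ r.2, b ∈ Q

/-- x is a resting complex: a member of some resting set. -/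
def RestingComplex (R : Set (Rxn C)) (x : C) : Prop :=
  ∃ Q, IsRestingSet R Q ∧ x ∈ Q

/-- One step of a fast transition: replace one occurrence of x by the products of a
fast reaction ({x}, P) ∈ R. -/
def FastStep (R : Set (Rxn C)) (M N : Multiset C) : Prop :=
  ∃ (x : C) (P M' : Multiset C),
    ((({x} : Multiset C), P) : Rxn C) ∈ R ∧ M = x ::ₘ M' ∧ N = P + M'

/-- A fast transition: finitely many fast steps. -/
def FastTransition (R : Set (Rxn C)) : Multiset C → Multiset C → Prop :=
  Relation.ReflTransGen (FastStep R)

/-- The fate predicate Fate(x, F), for x a complex and F a finite multiset of resting sets. -/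
inductive Fate (R : Set (Rxn C)) : C → Multiset (Set C) → Prop
  | resting (x : C) (h : IsRestingSet R (scc R x)) :
      Fate R x {scc R x}
  | step (x a : C) (l : List (C × Multiset (Set C)))
      (hnr : ¬ IsRestingSet R (scc R x))
      (ha : a ∈ scc R x)
      (hr : ((({a} : Multiset C), (↑(l.map Prod.fst) : Multiset C)) : Rxn C) ∈ R)
      (hout : ∃ b ∈ l.map Prod.fst, b ∉ scc R x)
      (hf : ∀ p ∈ l, Fate R p.1 p.2) :
      Fate R x (l.map Prod.snd).sum

/-- B ~ F : the multiset B of complexes represents the multiset F of resting sets,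
i.e. there is a bijective matching pairing each b ∈ B with a Q ∈ F with b ∈ Q. -/
def Represents (B : Multiset C) (F : Multiset (Set C)) : Prop :=
  Multiset.Rel (fun b Q => b ∈ Q) B F

/-- F is a fate of the multiset P of complexes: F = F_1 + ... + F_n where
P = {b_1, ..., b_n} and Fate(b_i, F_i) for each i. -/
def FateM (R : Set (Rxn C)) (P : Multiset C) (F : Multiset (Set C)) : Prop :=
  ∃ l : List (C × Multiset (Set C)),
    P = (↑(l.map Prod.fst) : Multiset C) ∧
    F = (l.map Prod.snd).sum ∧
    ∀ p ∈ l, Fate R p.1 p.2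

/-- The condensed reactions: for each slow reaction ({a₁, a₂}, P) ∈ R and each fate F
of P, the condensed reaction ({SCC(a₁), SCC(a₂)}, F). -/
def IsCondensed (R : Set (Rxn C)) (Ahat Bhat : Multiset (Set C)) : Prop :=
  ∃ (a1 a2 : C) (P : Multiset C),
    ((({a1, a2} : Multiset C), P) : Rxn C) ∈ R ∧
    Ahat = ({scc R a1, scc R a2} : Multiset (Set C)) ∧
    FateM R P Bhat

/-- Every reaction in R is fast (unimolecular) or slow (bimolecular). -/
def FastOrSlow (R : Set (Rxn C)) : Prop :=
  ∀ r ∈ R, r.1.card = 1 ∨ r.1.card = 2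

/-- Reactants and products of every reaction are nonempty. -/
def NonemptyRxns (R : Set (Rxn C)) : Prop :=
  ∀ r ∈ R, r.1 ≠ 0 ∧ r.2 ≠ 0

/-- Property 3: every finite cyclic sequence of fast reactions, in which each reaction
consumes a product of the previous one (cyclically), consists of (1,1) reactions only. -/
def Prop3 (R : Set (Rxn C)) : Prop :=
  ∀ (n : ℕ) (hn : 0 < n) (r : Fin n → Rxn C),
    (∀ i, r i ∈ R ∧ (r i).1.card = 1) →
    (∀ i : Fin n, ∀ a ∈ (r ⟨(i.1 + 1) % n, Nat.mod_lt _ hn⟩).1, a ∈ (r i).2) →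
    ∀ i, (r i).2.card = 1

/-- Property 4: both reactants of every slow reaction are resting complexes. -/
def Prop4 (R : Set (Rxn C)) : Prop :=
  ∀ r ∈ R, r.1.card = 2 → ∀ a ∈ r.1, RestingComplex R a

/-- A resting-state transition from {a₁, a₂} to B: a slow reaction ({a₁, a₂}, P) ∈ R
followed by a fast transition from P to B. -/
def RestingTransition (R : Set (Rxn C)) (a1 a2 : C) (B : Multiset C) : Prop :=
  ∃ P : Multiset C, ((({a1, a2} : Multiset C), P) : Rxn C) ∈ R ∧ FastTransition R P B

/-- One step of a sequence of detailed reactions: remove the reactants of some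
reaction in R from the current multiset and add its products. -/
def DetailedStep (R : Set (Rxn C)) (M N : Multiset C) : Prop :=
  ∃ r ∈ R, ∃ M' : Multiset C, M = r.1 + M' ∧ N = r.2 + M'

/-- One step of a sequence of condensed reactions: remove the reactant multiset of a
condensed reaction from the current multiset of resting sets and add its products. -/
def CondensedStep (R : Set (Rxn C)) (M N : Multiset (Set C)) : Prop :=
  ∃ Ahat Bhat M' : Multiset (Set C),
    IsCondensed R Ahat Bhat ∧ M = Ahat + M' ∧ N = Bhat + M'

lemma mem_scc_self (R : Set (Rxn C)) (a : C) : a ∈ scc R a :=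
  ⟨Relation.ReflTransGen.refl, Relation.ReflTransGen.refl⟩

lemma scc_eq_of_mem (R : Set (Rxn C)) {a b : C} (h : b ∈ scc R a) :
    scc R a = scc R b := by
  obtain ⟨hab, hba⟩ := h
  ext y
  exact ⟨fun ⟨h1, h2⟩ => ⟨hba.trans h1, h2.trans hab⟩,
         fun ⟨h1, h2⟩ => ⟨hab.trans h1, h2.trans hba⟩⟩

lemma fate_of_scc_eq (R : Set (Rxn C)) {a b : C} (hab : scc R a = scc R b)
    {F : Multiset (Set C)} (h : Fate R b F) : Fate R a F := by
  cases h with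
  | resting x hx =>
      rw [← hab] at hx ⊢
      exact Fate.resting a hx
  | step x x' l hnr hx' hr hout hf =>
      rw [← hab] at hnr hx' hout
      exact Fate.step a x' l hnr hx' hr hout hf

/-- Key consequence of Property 3: if a fast reaction ({a}, P) has a product b that
can reach a back along Γ, then P is a singleton. -/
lemma card_one_of_cycle (R : Set (Rxn C)) (h3 : Prop3 R)
    {a b : C} {P : Multiset C}
    (hr : ((({a} : Multiset C), P) : Rxn C) ∈ R)
    (hb : b ∈ P) (hba : Reach R b a) : P.card = 1 := by
  obtain ⟨L, hchain, hlast⟩ := List.exists_isChain_cons_of_relationReflTransGen hba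
  set nodes : List C := b :: L with hnodes
  have hchain' : List.Chain' (FastEdge R) nodes := hchain
  have hget : ∀ (i : ℕ) (h : i < nodes.length - 1),
      FastEdge R (nodes.get ⟨i, by omega⟩) (nodes.get ⟨i + 1, by omega⟩) :=
    fun i h => List.isChain_iff_getElem.mp hchain i (by omega)
  have hlen : nodes.length = L.length + 1 := rfl
  set n : ℕ := L.length + 1 with hn'
  have hn : 0 < n := Nat.succ_pos _
  -- the cyclic sequence of reactions
  set f : ℕ → Rxn C := fun k =>
    if k = 0 then (({a} : Multiset C), P)
    else (({nodes.getD (k - 1) b} : Multiset C), ({nodes.getD k b} : Multiset C))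
    with hf
  have hgetD : ∀ k (h : k < nodes.length), nodes.getD k b = nodes.get ⟨k, h⟩ := by
    intro k h
    simp [List.getD_eq_getElem?_getD, List.getElem?_eq_getElem h]
  have hlast' : nodes.getD L.length b = a := by
    rw [hgetD L.length (by simp [hlen, hn'])]
    rw [← hlast]
    simp [List.getLast_eq_getElem, hlen]
    rfl
  have hmemR : ∀ i : Fin n, f i.1 ∈ R ∧ (f i.1).1.card = 1 := by
    intro ⟨k, hk⟩
    by_cases h0 : k = 0
    · simp [hf, h0, hr]
    · obtain ⟨j, rfl⟩ := Nat.exists_eq_succ_of_ne_zero h0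
      have hj : j < nodes.length - 1 := by simp [hlen]; omega
      have := hget j hj
      simp only [hf, if_neg h0]
      constructor
      · have h1 : nodes.getD (j + 1 - 1) b = nodes.get ⟨j, by omega⟩ := by
          rw [hgetD _ (by simp [hlen]; omega)]
          rfl
        have h2 : nodes.getD (j + 1) b = nodes.get ⟨j + 1, by simp [hlen]; omega⟩ := by
          rw [hgetD]
        rw [h1, h2]
        exact this
      · simp
  have hcyc : ∀ i : Fin n, ∀ x ∈ (f ((i.1 + 1) % n)).1, x ∈ (f i.1).2 := by
    intro ⟨k, hk⟩ x hx
    by_cases hend : k + 1 = n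
    · -- wraps around to 0
      have hmod : (k + 1) % n = 0 := by rw [hend]; exact Nat.mod_self n
      rw [hmod] at hx
      simp only [hf, if_pos rfl, Multiset.mem_singleton] at hx
      by_cases h0 : k = 0
      · -- n = 1, so L = [], so a = b ∈ P
        have hL : L.length = 0 := by omega
        have hb' : b = a := by
          have h1 := hlast'
          rw [hL] at h1
          exact h1
        simp only [hf, if_pos h0]
        rw [hx, ← hb']
        exact hb
      · simp only [hf, if_neg h0, Multiset.mem_singleton]
        have hkL : k = L.length := by omega
        rw [hx, hkL, hlast']
    · have hmod : (k + 1) % n = k + 1 := Nat.mod_eq_of_lt (by omega)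
      rw [hmod] at hx
      simp only [hf, if_neg (Nat.succ_ne_zero k), Multiset.mem_singleton,
        Nat.add_sub_cancel] at hx
      subst hx
      by_cases h0 : k = 0
      · -- x = nodes.getD 0 b = b, goal: b ∈ P
        simp only [hf, if_pos h0, h0]
        have : nodes.getD 0 b = b := rfl
        rw [this]; exact hb
      · simp only [hf, if_neg h0, Multiset.mem_singleton]
  have := h3 n hn (fun i => f i.1) hmemR hcyc ⟨0, hn⟩
  -- this : (f 0).2.card = 1
  simpa [hf] using this

/-- Assuming Property 3, fates are inherited backwards along fast reactions: for a
fast reaction ({a}, {b₁, …, bₙ}) ∈ R and fates Fᵢ with Fate(bᵢ, Fᵢ), we have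
Fate(a, F₁ + … + Fₙ). -/
theorem fate_backward_along_fast {C : Type*} [Fintype C] (R : Set (Rxn C))
    (hRfin : R.Finite) (hne : NonemptyRxns R) (h3 : Prop3 R)
    (a : C) (l : List (C × Multiset (Set C)))
    (hr : ((({a} : Multiset C), (↑(l.map Prod.fst) : Multiset C)) : Rxn C) ∈ R)
    (hf : ∀ p ∈ l, Fate R p.1 p.2) :
    Fate R a (l.map Prod.snd).sum := by
  have hne' : (↑(l.map Prod.fst) : Multiset C) ≠ 0 := (hne _ hr).2
  have hl0 : l ≠ [] := by
    rintro rfl; simp at hne'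
  by_cases hmem : ∃ b ∈ l.map Prod.fst, b ∈ scc R a
  · obtain ⟨b, hbP, hbs⟩ := hmem
    have hcard : (↑(l.map Prod.fst) : Multiset C).card = 1 :=
      card_one_of_cycle R h3 hr (by simpa using hbP) hbs.2
    have hlen : l.length = 1 := by simpa using hcard
    obtain ⟨p, rfl⟩ := List.length_eq_one_iff.mp hlen
    have hbp : b = p.1 := by simpa using hbP
    subst hbp
    have hfp : Fate R p.1 p.2 := hf p (by simp)
    have : Fate R a p.2 := fate_of_scc_eq R (scc_eq_of_mem R hbs) hfp
    simpa using this
  · push_neg at hmem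
    obtain ⟨p, hp⟩ := List.exists_mem_of_ne_nil l hl0
    have hbP' : p.1 ∈ l.map Prod.fst := List.mem_map_of_mem hp
    have hnr : ¬ IsRestingSet R (scc R a) := by
      intro hres
      refine hmem p.1 hbP' ?_
      refine hres.2 _ hr (by simp) ?_ p.1 (by simpa using hbP')
      intro x hx
      rw [Multiset.mem_singleton] at hx
      rw [hx]
      exact mem_scc_self R a
    have hout : ∃ b ∈ l.map Prod.fst, b ∉ scc R a :=
      ⟨p.1, hbP', hmem p.1 hbP'⟩
    exact Fate.step a a l hnr (mem_scc_self R a) hr hout hf
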